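/- Let κ ≥ 2 be an integer and let s, t ∈ ℝ with t > 0. Then ∫_ℝ (t+√−1·x)^{−κ}·exp(2πi·sx) dx equals (2π)^κ/(κ−1)! · s^{κ−1} · exp(−2π·s·t) if s > 0, and equals 0 if s ≤ 0. -/

import Mathlib

open MeasureTheory Set Filter Topology Asymptotics FourierTransform

namespace Stmt1Aux


lemma norm_pow_mul_cexp (m : ℕ) (z : ℂ) {u : ℝ} (hu : 0 ≤ u) :
    ‖(u : ℂ) ^ m * Complex.exp (-(z * u))‖ = u ^ m * Real.exp (-(z.re * u)) := by
  rw [norm_mul, norm_pow, Complex.norm_exp]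
  have : (-(z * (u:ℂ))).re = -(z.re * u) := by simp [Complex.mul_re]
  rw [this, Complex.norm_real, Real.norm_eq_abs, abs_of_nonneg hu]

lemma tendsto_pow_mul_cexp (m : ℕ) (z : ℂ) (hz : 0 < z.re) :
    Tendsto (fun u : ℝ => (u : ℂ) ^ m * Complex.exp (-(z * u))) atTop (𝓝 0) := by
  rw [tendsto_zero_iff_norm_tendsto_zero]
  have h := tendsto_rpow_mul_exp_neg_mul_atTop_nhds_zero m z.re hz
  apply h.congr'
  filter_upwards [eventually_ge_atTop (0:ℝ)] with u hu
  rw [norm_pow_mul_cexp m z hu, Real.rpow_natCast, neg_mul]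

lemma integrableOn_pow_mul_cexp (m : ℕ) (z : ℂ) (hz : 0 < z.re) :
    IntegrableOn (fun u : ℝ => (u : ℂ) ^ m * Complex.exp (-(z * u))) (Ioi 0) := by
  have hc : Continuous fun u : ℝ => (u : ℂ) ^ m * Complex.exp (-(z * u)) := by
    fun_prop
  refine Iff.mp integrableOn_Ici_iff_integrableOn_Ioi <|
    ((hc.continuousOn).locallyIntegrableOn measurableSet_Ici).integrableOn_of_isBigO_atTop
      (g := fun u => Real.exp (-(z.re/2) * u)) ?_
      ⟨Ioi (z.re/2), Ioi_mem_atTop _, exp_neg_integrableOn_Ioi _ (by positivity)⟩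
  rw [isBigO_iff]
  refine ⟨1, ?_⟩
  have h := tendsto_rpow_mul_exp_neg_mul_atTop_nhds_zero m (z.re/2) (by positivity)
  have h1 := h.eventually_le_const (by norm_num : (0:ℝ) < 1)
  filter_upwards [h1, eventually_ge_atTop (0:ℝ)] with u hu1 hu0
  rw [norm_pow_mul_cexp m z hu0, Real.rpow_natCast] at *
  have hsplit : -(z.re * u) = -(z.re/2 * u) + -(z.re/2 * u) := by ring
  rw [hsplit, Real.exp_add, Real.norm_eq_abs, Real.abs_exp, one_mul, ← mul_assoc]
  rw [neg_mul] at hu1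
  calc u ^ m * Real.exp (-(z.re/2 * u)) * Real.exp (-(z.re/2 * u))
      ≤ 1 * Real.exp (-(z.re/2 * u)) :=
        mul_le_mul_of_nonneg_right hu1 (Real.exp_pos _).le
    _ = Real.exp (-(z.re/2) * u) := by rw [one_mul, neg_mul]

lemma integral_pow_mul_cexp (z : ℂ) (hz : 0 < z.re) : ∀ n : ℕ,
    ∫ u in Ioi (0:ℝ), (u : ℂ) ^ n * Complex.exp (-(z * u)) = n.factorial / z ^ (n + 1) := by
  have hz0 : z ≠ 0 := fun h => by simp [h] at hz
  have hderiv_exp : ∀ u : ℝ, HasDerivAt (fun v : ℝ => Complex.exp (-(z * v)))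
      (-z * Complex.exp (-(z * u))) u := by
    intro u
    have h2 : HasDerivAt (fun w : ℂ => Complex.exp (-(z * w)))
        (Complex.exp (-(z * u)) * (-z)) (u : ℂ) := by
      have := (((hasDerivAt_id ((u:ℝ):ℂ)).const_mul z).neg).cexp
      simpa using this
    have h3 := h2.comp_ofReal
    convert h3 using 1
    ring
  intro n
  induction n with
  | zero =>
    have key := integral_Ioi_of_hasDerivAt_of_tendsto' (a := (0:ℝ))
      (f := fun u : ℝ => -Complex.exp (-(z * u)) / z)
      (f' := fun u : ℝ => Complex.exp (-(z * u)))
      (fun u _ => by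
        have := ((hderiv_exp u).neg).div_const z
        refine this.congr_deriv ?_
        field_simp)
      (by simpa using integrableOn_pow_mul_cexp 0 z hz)
      (m := 0) (by
        have := (tendsto_pow_mul_cexp 0 z hz).neg.div_const z
        simpa using this)
    simp only [pow_zero, one_mul] at key ⊢
    rw [key]
    simp [neg_div]
  | succ n ih =>
    have intn := integrableOn_pow_mul_cexp n z hz
    have intn1 := integrableOn_pow_mul_cexp (n+1) z hz
    have key := integral_Ioi_of_hasDerivAt_of_tendsto' (a := (0:ℝ))
      (f := fun u : ℝ => (u : ℂ) ^ (n+1) * Complex.exp (-(z * u)))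
      (f' := fun u : ℝ => ((n:ℂ)+1) * ((u:ℂ)^n * Complex.exp (-(z * u)))
        - z * ((u:ℂ)^(n+1) * Complex.exp (-(z * u))))
      (fun u _ => by
        have hp : HasDerivAt (fun v : ℝ => (v : ℂ) ^ (n+1))
            (((n:ℂ)+1) * (u:ℂ)^n) u := by
          have := (hasDerivAt_pow (n+1) ((u:ℝ):ℂ)).comp_ofReal
          simpa using this
        have := hp.mul (hderiv_exp u)
        refine this.congr_deriv ?_
        push_cast
        ring)
      (by exact ((intn.const_mul _).sub (intn1.const_mul _)))
      (m := 0) (tendsto_pow_mul_cexp (n+1) z hz)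
    rw [integral_sub (intn.const_mul _) (intn1.const_mul _),
        integral_const_mul, integral_const_mul, ih] at key
    simp only [Complex.ofReal_zero, mul_zero, neg_zero, Complex.exp_zero, mul_one,
      zero_pow (Nat.succ_ne_zero n), zero_mul, sub_zero, zero_sub, zero_mul] at key
    set A := ∫ u in Ioi (0:ℝ), (u:ℂ)^(n+1) * Complex.exp (-(z*u)) with hA
    have hA' : z * A = ((n:ℂ)+1) * (n.factorial / z^(n+1)) := by linear_combination -key
    have hz1 : (z:ℂ)^(n+1) ≠ 0 := pow_ne_zero _ hz0
    have hA'' : z * A * z^(n+1) = ((n:ℂ)+1) * n.factorial := by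
      rw [hA']
      field_simp
    rw [Nat.factorial_succ]
    push_cast
    rw [pow_succ, eq_div_iff (mul_ne_zero hz1 hz0)]
    linear_combination hA''

end Stmt1Aux

open Stmt1Aux

/-- for an integer κ ≥ 2 and s, t ∈ ℝ with t > 0,
`∫_ℝ (t+√−1·x)^{−κ}·exp(2πi·sx) dx` equals `(2π)^κ/(κ−1)!·s^{κ−1}·exp(−2π·s·t)` if s > 0,
and equals 0 if s ≤ 0. -/
theorem stmt1 (κ : ℕ) (hκ : 2 ≤ κ) (s t : ℝ) (ht : 0 < t) :
    (∫ x : ℝ, ((t : ℂ) + Complex.I * (x : ℂ)) ^ (-(κ : ℤ))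
        * Complex.exp (2 * (Real.pi : ℂ) * Complex.I * ((s * x : ℝ) : ℂ)))
      = if 0 < s then
          (2 * (Real.pi : ℂ)) ^ κ / (Nat.factorial (κ - 1) : ℂ) * ((s : ℂ)) ^ (κ - 1)
            * Complex.exp (-(2 * (Real.pi : ℂ)) * ((s * t : ℝ) : ℂ))
        else 0 := by
  have hπ := Real.pi_pos
  have hκ1 : 1 ≤ κ := le_trans one_le_two hκ
  have hκ1' : (κ - 1) + 1 = κ := Nat.sub_add_cancel hκ1
  have hκ10 : κ - 1 ≠ 0 := by omega
  set C : ℂ := (2 * (Real.pi : ℂ)) ^ κ / (Nat.factorial (κ - 1) : ℂ) with hC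
  set f : ℝ → ℂ := fun x => ((t : ℂ) + Complex.I * (x : ℂ)) ^ (-(κ : ℤ)) with hf
  set g : ℝ → ℂ := fun u => if 0 < u then
      C * ((u : ℂ)) ^ (κ - 1) * Complex.exp (-(2 * (Real.pi : ℂ)) * ((u * t : ℝ) : ℂ))
    else 0 with hg
  -- nonvanishing of t + I x
  have h_ne : ∀ x : ℝ, ((t : ℂ) + Complex.I * (x : ℂ)) ≠ 0 := by
    intro x h
    have := congrArg Complex.re h
    simp [Complex.add_re, Complex.mul_re] at this
    exact ht.ne' this
  have h2π : (2 * (Real.pi : ℂ)) ≠ 0 := by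
    simp [Real.pi_ne_zero, Complex.ofReal_ne_zero]
  have hfact : ((Nat.factorial (κ - 1) : ℂ)) ≠ 0 := by
    exact_mod_cast Nat.cast_ne_zero.mpr (Nat.factorial_ne_zero _)
  -- rewrite f as an inverse power
  have hf' : ∀ x : ℝ, f x = (((t : ℂ) + Complex.I * (x : ℂ)) ^ κ)⁻¹ := by
    intro x
    simp only [hf, zpow_neg, zpow_natCast]
  -- Fourier transform of g is f
  have hFg : ∀ x : ℝ, 𝓕 g x = f x := by
    intro x
    set z : ℂ := (2 * (Real.pi : ℂ)) * ((t : ℂ) + Complex.I * (x : ℂ)) with hz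
    have hzre : 0 < z.re := by
      have : z.re = 2 * Real.pi * t := by
        rw [hz]
        simp [Complex.mul_re, Complex.add_re, Complex.add_im, Complex.mul_im]
      rw [this]; positivity
    rw [Real.fourier_real_eq_integral_exp_smul]
    have hcong : (fun v : ℝ => Complex.exp (↑(-2 * Real.pi * v * x) * Complex.I) • g v)
        = Set.indicator (Ioi 0)
            (fun v : ℝ => C * ((v : ℂ) ^ (κ - 1) * Complex.exp (-(z * v)))) := by
      funext v
      rw [Set.indicator_apply]
      by_cases hv : 0 < v
      · have harg : (-(2 * (Real.pi : ℂ)) * ((v * t : ℝ) : ℂ))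
            + (↑(-2 * Real.pi * v * x) * Complex.I) = -(z * v) := by
          rw [hz]; push_cast; ring
        simp only [hg, Set.mem_Ioi, if_pos hv, smul_eq_mul]
        rw [show Complex.exp (↑(-2 * Real.pi * v * x) * Complex.I)
              * (C * (v : ℂ) ^ (κ - 1)
                * Complex.exp (-(2 * (Real.pi : ℂ)) * ((v * t : ℝ) : ℂ)))
            = C * ((v : ℂ) ^ (κ - 1)
              * Complex.exp ((-(2 * (Real.pi : ℂ)) * ((v * t : ℝ) : ℂ))
                + (↑(-2 * Real.pi * v * x) * Complex.I))) from by
          rw [Complex.exp_add]; ring]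
        rw [harg]
      · simp only [hg, Set.mem_Ioi, if_neg hv, smul_eq_mul, mul_zero]
    rw [hcong, integral_indicator measurableSet_Ioi, integral_const_mul,
      integral_pow_mul_cexp z hzre (κ - 1), hκ1']
    rw [hf' x, hz, mul_pow]
    rw [hC]
    field_simp
  -- integrability of g
  have hzre0 : 0 < ((2 * (Real.pi : ℂ)) * (t : ℂ)).re := by
    have : ((2 * (Real.pi : ℂ)) * (t : ℂ)).re = 2 * Real.pi * t := by
      push_cast [← Complex.ofReal_mul]
      simp [← Complex.ofReal_mul]
    rw [this]; positivity
  have hg_int : Integrable g := by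
    have hgeq : g = Set.indicator (Ioi 0)
        (fun u : ℝ => C * ((u : ℂ) ^ (κ - 1)
          * Complex.exp (-(((2 * (Real.pi : ℂ)) * (t : ℂ)) * u)))) := by
      funext u
      rw [Set.indicator_apply, hg]
      by_cases hu : 0 < u
      · simp only [Set.mem_Ioi, if_pos hu]
        rw [mul_assoc]
        congr 2
        push_cast
        ring
      · simp only [Set.mem_Ioi, if_neg hu]
    rw [hgeq]
    exact MeasureTheory.IntegrableOn.integrable_indicator
      ((integrableOn_pow_mul_cexp (κ - 1) _ hzre0).const_mul C) measurableSet_Ioi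
  -- integrability of f
  have hf_cont : Continuous f := by
    have : Continuous fun x : ℝ => ((t : ℂ) + Complex.I * (x : ℂ)) := by fun_prop
    have hcont : Continuous fun x : ℝ => (((t : ℂ) + Complex.I * (x : ℂ)) ^ κ)⁻¹ :=
      (this.pow κ).inv₀ (fun x => pow_ne_zero _ (h_ne x))
    exact (funext hf' ▸ hcont)
  have hf_int : Integrable f := by
    set c : ℝ := (t ^ (κ - 2))⁻¹ * max 1 (t ^ 2)⁻¹ with hc
    refine (Integrable.const_mul integrable_inv_one_add_sq c).mono'
      hf_cont.aestronglyMeasurable (ae_of_all _ fun x => ?_)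
    have habs : ‖(t : ℂ) + Complex.I * (x : ℂ)‖ ^ 2 = t ^ 2 + x ^ 2 := by
      rw [Complex.sq_norm, Complex.normSq_apply]
      simp [Complex.add_re, Complex.add_im, Complex.mul_re, Complex.mul_im]
      ring
    set r : ℝ := ‖(t : ℂ) + Complex.I * (x : ℂ)‖ with hr
    have hrt : t ≤ r := by
      have h1 := Complex.abs_re_le_norm ((t : ℂ) + Complex.I * (x : ℂ))
      have h2 : ((t : ℂ) + Complex.I * (x : ℂ)).re = t := by
        simp [Complex.add_re, Complex.mul_re]
      rw [h2] at h1
      rw [hr]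
      exact (le_abs_self t).trans h1
    have hrpos : 0 < r := lt_of_lt_of_le ht hrt
    have hnorm : ‖f x‖ = (r ^ κ)⁻¹ := by
      rw [hf' x, norm_inv, norm_pow]
    rw [hnorm]
    have hsplit : r ^ κ = r ^ 2 * r ^ (κ - 2) := by
      rw [← pow_add]
      congr 1
      omega
    have hstep1 : (r ^ κ)⁻¹ ≤ (t ^ (κ - 2))⁻¹ * (t ^ 2 + x ^ 2)⁻¹ := by
      rw [hsplit, mul_inv, habs, mul_comm]
      apply mul_le_mul_of_nonneg_right _ (by positivity)
      exact inv_anti₀ (by positivity) (pow_le_pow_left₀ ht.le hrt _)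
    have hstep2 : (t ^ 2 + x ^ 2)⁻¹ ≤ max 1 (t ^ 2)⁻¹ * (1 + x ^ 2)⁻¹ := by
      rw [← div_eq_mul_inv, le_div_iff₀ (by positivity), inv_mul_le_iff₀ (by positivity)]
      have h1 : (1:ℝ) ≤ max 1 (t ^ 2)⁻¹ * t ^ 2 := by
        calc (1:ℝ) = (t ^ 2)⁻¹ * t ^ 2 := by field_simp
          _ ≤ _ := by gcongr; exact le_max_right _ _
      have h2 : x ^ 2 ≤ max 1 (t ^ 2)⁻¹ * x ^ 2 := by
        nth_rewrite 1 [← one_mul (x ^ 2)]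
        gcongr
        exact le_max_left _ _
      nlinarith [sq_nonneg x, sq_nonneg t]
    calc (r ^ κ)⁻¹ ≤ (t ^ (κ - 2))⁻¹ * (t ^ 2 + x ^ 2)⁻¹ := hstep1
      _ ≤ (t ^ (κ - 2))⁻¹ * (max 1 (t ^ 2)⁻¹ * (1 + x ^ 2)⁻¹) := by
          gcongr
      _ = c * (1 + x ^ 2)⁻¹ := by rw [hc]; ring
  -- continuity of g
  have hg_cont : Continuous g := by
    rw [hg]
    apply Continuous.if
    · intro a ha
      have : a = 0 := by
        have : frontier {x : ℝ | 0 < x} = {0} := frontier_Ioi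
        rw [this] at ha
        simpa using ha
      subst this
      simp [zero_pow hκ10]
    · fun_prop
    · exact continuous_const
  -- Fourier inversion
  have hFg' : 𝓕 g = f := funext hFg
  have hfi_int : Integrable (𝓕 g) := hFg' ▸ hf_int
  have hinv := hg_int.fourierInv_fourier_eq hfi_int (hg_cont.continuousAt (x := s))
  rw [hFg'] at hinv
  have hgoal : (∫ x : ℝ, f x * Complex.exp (2 * (Real.pi : ℂ) * Complex.I * ((s * x : ℝ) : ℂ)))
      = 𝓕⁻ f s := by
    rw [Real.fourierInv_eq']
    apply integral_congr_ae
    filter_upwards with x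
    rw [smul_eq_mul, RCLike.inner_apply, conj_trivial]
    rw [mul_comm (Complex.exp _)]
    congr 1
    push_cast
    ring
  rw [hgoal, hinv, hg]
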